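/- arXiv:1807.09843 — 2 statements merged into one kernel-verified Lean document; each statement's English description precedes it below -/
import Mathlib

section
/- Let (g, r) be a quasitriangular Lie bialgebra, m ≥ 1, and r^(m) = (r,…,r) − Mixᵐ(r) ∈ gᵐ ⊗ gᵐ. Then the diagonal embedding diag_m : g → gᵐ, x ↦ (x,…,x), is a morphism of Lie bialgebras from (g, δ_r) to (gᵐ, δ_{r^(m)}), i.e. δ_{r^(m)}(diag_m(x)) = (diag_m ⊗ diag_m)(δ_r(x)) for all x ∈ g. -/
/- STATEMENT 4: For a quasitriangular Lie bialgebra (g, r) and m ≥ 1, with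
r^(m) = (r,…,r) − Mixᵐ(r) ∈ gᵐ ⊗ gᵐ, the diagonal embedding diag_m : g → gᵐ is a
morphism of Lie bialgebras (g, δ_r) → (gᵐ, δ_{r^(m)}):
δ_{r^(m)}(diag_m x) = (diag_m ⊗ diag_m)(δ_r x). -/

open TensorProduct DirectSum

section defs

variable (K : Type*) [Field K] [CharZero K]
variable (L : Type*) [LieRing L] [LieAlgebra K L]

/-- `gᵐ`, the direct product of `m` copies of `L`. -/
abbrev Lm (m : ℕ) : Type _ := ⨁ _ : Fin m, L

/-- the embedding of `L` into `gᵐ` as the `j`-th component. -/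
noncomputable def sing (m : ℕ) (j : Fin m) : L →ₗ[K] Lm L m :=
  DirectSum.lof K (Fin m) (fun _ => L) j

/-- the diagonal embedding `g → gᵐ`. -/
noncomputable def diagm (m : ℕ) : L →ₗ[K] Lm L m := ∑ j : Fin m, sing K L m j

end defs

section aux

variable {K : Type*} [Field K] [CharZero K]
variable {L : Type*} [LieRing L] [LieAlgebra K L]

lemma my_lie_sum {M : Type*} [AddCommGroup M] [Module K M] [LieRingModule L M]
    [LieModule K L M] {α : Type*} (s : Finset α) (z : L) (f : α → M) :
    ⁅z, ∑ i ∈ s, f i⁆ = ∑ i ∈ s, ⁅z, f i⁆ := by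
  classical
  induction s using Finset.induction_on with
  | empty => simp
  | @insert a s h ih => simp [Finset.sum_insert h, lie_add, ih]

lemma my_sum_lie {M : Type*} [AddCommGroup M] [Module K M] [LieRingModule L M]
    [LieModule K L M] {α : Type*} (s : Finset α) (z : M) (f : α → L) :
    ⁅∑ i ∈ s, f i, z⁆ = ∑ i ∈ s, ⁅f i, z⁆ := by
  classical
  induction s using Finset.induction_on with
  | empty => simp
  | @insert a s h ih => simp [Finset.sum_insert h, add_lie, ih]

lemma diag_lie_sing (m : ℕ) (z a : L) (k : Fin m) :
    ⁅diagm K L m z, sing K L m k a⁆ = sing K L m k ⁅z, a⁆ := by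
  classical
  rw [diagm, LinearMap.sum_apply, my_sum_lie (K := K)]
  rw [Finset.sum_eq_single k]
  · simp only [sing, DirectSum.lof_eq_of]
    exact DirectSum.lie_of_same (fun _ : Fin m => L) z a
  · intro j _ hj
    simp only [sing, DirectSum.lof_eq_of]
    exact DirectSum.lie_of_of_ne (fun _ : Fin m => L) hj z a
  · simp

lemma diag_lie_map (m : ℕ) (z : L) (k l : Fin m) (t : L ⊗[K] L) :
    ⁅diagm K L m z, TensorProduct.map (sing K L m k) (sing K L m l) t⁆
      = TensorProduct.map (sing K L m k) (sing K L m l) ⁅z, t⁆ := by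
  induction t using TensorProduct.induction_on with
  | zero => simp
  | tmul a b =>
      simp [TensorProduct.map_tmul, LieModule.lie_tmul_right, diag_lie_sing]
  | add u v hu hv => simp [lie_add, map_add, hu, hv]

lemma comm_lie (z : L) (t : L ⊗[K] L) :
    TensorProduct.comm K L L ⁅z, t⁆ = ⁅z, TensorProduct.comm K L L t⁆ := by
  induction t using TensorProduct.induction_on with
  | zero => simp
  | tmul a b => simp [LieModule.lie_tmul_right, add_comm]
  | add u v hu hv => simp [lie_add, map_add, hu, hv]

lemma map_diag_eq_sum (m : ℕ) (t : L ⊗[K] L) :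
    TensorProduct.map (diagm K L m) (diagm K L m) t
      = ∑ k : Fin m, ∑ l : Fin m,
          TensorProduct.map (sing K L m k) (sing K L m l) t := by
  induction t using TensorProduct.induction_on with
  | zero => simp
  | tmul a b =>
      simp only [diagm, TensorProduct.map_tmul, LinearMap.sum_apply,
        TensorProduct.sum_tmul, TensorProduct.tmul_sum]
      exact Finset.sum_comm
  | add u v hu hv =>
      simp only [map_add, hu, hv, ← Finset.sum_add_distrib]

lemma tri_sum {M : Type*} [AddCommGroup M] (m : ℕ) (F : Fin m → Fin m → M) :
    (∑ j : Fin m, F j j)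
      + ∑ k : Fin m, ∑ l : Fin m, (if k < l then F k l + F l k else 0)
      = ∑ k : Fin m, ∑ l : Fin m, F k l := by
  classical
  have h1 : ∑ k : Fin m, ∑ l : Fin m, (if k < l then F k l + F l k else 0)
      = (∑ k : Fin m, ∑ l : Fin m, (if k < l then F k l else 0))
        + ∑ k : Fin m, ∑ l : Fin m, (if k < l then F l k else 0) := by
    rw [← Finset.sum_add_distrib]
    refine Finset.sum_congr rfl fun k _ => ?_
    rw [← Finset.sum_add_distrib]
    refine Finset.sum_congr rfl fun l _ => ?_
    split <;> simp
  have h2 : ∑ k : Fin m, ∑ l : Fin m, (if k < l then F l k else 0)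
      = ∑ k : Fin m, ∑ l : Fin m, (if l < k then F k l else 0) := by
    rw [Finset.sum_comm]
  have h3 : ∑ j : Fin m, F j j
      = ∑ k : Fin m, ∑ l : Fin m, (if k = l then F k l else 0) := by
    refine Finset.sum_congr rfl fun k _ => ?_
    rw [Finset.sum_ite_eq (Finset.univ : Finset (Fin m)) k (fun l => F k l)]
    simp
  rw [h1, h2, h3, ← Finset.sum_add_distrib, ← Finset.sum_add_distrib]
  refine Finset.sum_congr rfl fun k _ => ?_
  rw [← Finset.sum_add_distrib, ← Finset.sum_add_distrib]
  refine Finset.sum_congr rfl fun l _ => ?_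
  rcases lt_trichotomy k l with h | h | h
  · simp [h, h.ne, asymm h]
  · simp [h, lt_irrefl]
  · simp [h, h.ne', asymm h]

end aux

theorem stmt4 {K : Type*} [Field K] [CharZero K]
    {L : Type*} [LieRing L] [LieAlgebra K L] [Module.Finite K L]
    (m : ℕ) (hm : 1 ≤ m)
    (ι : Type*) [Fintype ι] (x y : ι → L) (r : L ⊗[K] L)
    -- r = Σᵢ xᵢ ⊗ yᵢ is a quasitriangular r-matrix:
    (hr : r = ∑ i, x i ⊗ₜ[K] y i)
    (hΩ : ∀ z : L, ⁅z, (2 : K)⁻¹ • (r + TensorProduct.comm K L L r)⁆ = 0)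
    (hCYBE : ∑ i, ∑ j,
        (⁅x i, x j⁆ ⊗ₜ[K] (y i ⊗ₜ[K] y j) + x i ⊗ₜ[K] (⁅y i, x j⁆ ⊗ₜ[K] y j)
          + x i ⊗ₜ[K] (x j ⊗ₜ[K] ⁅y i, y j⁆)) = (0 : L ⊗[K] (L ⊗[K] L)))
    -- Mixᵐ(r) = Σ_{k<l} Σᵢ ((yᵢ)_k ⊗ (xᵢ)_l − (xᵢ)_l ⊗ (yᵢ)_k)
    (Mix : Lm L m ⊗[K] Lm L m)
    (hMix : Mix = ∑ k : Fin m, ∑ l : Fin m, ∑ i,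
        if k < l then (sing K L m k (y i) ⊗ₜ[K] sing K L m l (x i)
          - sing K L m l (x i) ⊗ₜ[K] sing K L m k (y i)) else 0)
    -- r^(m) = (r, …, r) − Mixᵐ(r)
    (rM : Lm L m ⊗[K] Lm L m)
    (hrM : rM = (∑ j : Fin m,
        TensorProduct.map (sing K L m j) (sing K L m j) r) - Mix) :
    -- diag_m is a morphism of Lie bialgebras from (g, δ_r) to (gᵐ, δ_{r^(m)})
    ∀ z : L, ⁅diagm K L m z, rM⁆
      = TensorProduct.map (diagm K L m) (diagm K L m) ⁅z, r⁆ := by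
  classical
  intro z
  set s : L ⊗[K] L := ⁅z, r⁆ with hs
  have hzr : ⁅z, TensorProduct.comm K L L r⁆ = -s := by
    have h0 := hΩ z
    rw [lie_smul, smul_eq_zero] at h0
    have h0' : ⁅z, r + TensorProduct.comm K L L r⁆ = 0 :=
      h0.resolve_left (by norm_num)
    rw [lie_add] at h0'
    exact eq_neg_of_add_eq_zero_right h0'
  have hMix' : Mix = ∑ k : Fin m, ∑ l : Fin m,
      if k < l then
        (TensorProduct.map (sing K L m k) (sing K L m l)
            (TensorProduct.comm K L L r)
          - TensorProduct.map (sing K L m l) (sing K L m k) r) else 0 := by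
    rw [hMix]
    refine Finset.sum_congr rfl fun k _ => Finset.sum_congr rfl fun l _ => ?_
    split
    · rw [hr]
      simp [map_sum, comm_tmul, Finset.sum_sub_distrib]
    · simp
  have key : ∀ k l : Fin m,
      ⁅diagm K L m z, (if k < l then
        (TensorProduct.map (sing K L m k) (sing K L m l)
            (TensorProduct.comm K L L r)
          - TensorProduct.map (sing K L m l) (sing K L m k) r) else 0)⁆
      = -(if k < l then
          (TensorProduct.map (sing K L m k) (sing K L m l) s
            + TensorProduct.map (sing K L m l) (sing K L m k) s) else 0) := by
    intro k l
    split
    · rw [lie_sub, diag_lie_map, diag_lie_map, hzr, ← hs, map_neg]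
      abel
    · simp
  rw [hrM, hMix', lie_sub]
  rw [my_lie_sum (K := K), my_lie_sum (K := K)]
  simp only [my_lie_sum (K := K), diag_lie_map, key]
  rw [map_diag_eq_sum]
  simp only [Finset.sum_neg_distrib, sub_neg_eq_add]
  exact tri_sum m (fun k l => TensorProduct.map (sing K L m k) (sing K L m l) s)
end

section
/- For the inductively defined twists Twiᵐ(R) of a quasitriangular Hopf algebra (H, R), one has the closed formula Twiᵐ(R) = ∏_{k=2}^{m} ∏_{l=k-1}^{1} R_{k, m+l} in H^{⊗2m}, where the outer product is in increasing order of k, the inner product in decreasing order of l, and R_{ij} is R placed in tensor positions i and j. -/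
open TensorProduct

universe u

/-- A quasitriangular structure on a Hopf algebra `H`: an invertible element
`R ∈ H ⊗ H` with `Δᵒᵖ = R Δ R⁻¹` and the hexagon identities
`(I ⊗ Δ)(R) = R₁₃R₁₂`, `(Δ ⊗ I)(R) = R₁₃R₂₃`. -/
structure QuasiTriangular (K H : Type u) [Field K] [Ring H] [HopfAlgebra K H] where
  R : H ⊗[K] H
  Rinv : H ⊗[K] H
  mul_inv : R * Rinv = 1
  inv_mul : Rinv * R = 1
  /-- `Δᵒᵖ(h) R = R Δ(h)`, i.e. `Δᵒᵖ = R Δ R⁻¹`. -/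
  compat : ∀ h : H,
    (TensorProduct.comm K H H) (Coalgebra.comul (R := K) h) * R = R * Coalgebra.comul (R := K) h
  /-- `(I ⊗ Δ)(R) = R₁₃ R₁₂` in `H ⊗ (H ⊗ H)`. -/
  hex1 : LinearMap.lTensor H (Coalgebra.comul (R := K) (A := H)) R
    = Algebra.TensorProduct.map (AlgHom.id K H) Algebra.TensorProduct.includeRight R
      * Algebra.TensorProduct.map (AlgHom.id K H) Algebra.TensorProduct.includeLeft R
  /-- `(Δ ⊗ I)(R) = R₁₃ R₂₃` in `H ⊗ (H ⊗ H)`. -/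
  hex2 : Algebra.TensorProduct.assoc K K K H H H
      (LinearMap.rTensor H (Coalgebra.comul (R := K) (A := H)) R)
    = Algebra.TensorProduct.map (AlgHom.id K H) Algebra.TensorProduct.includeRight R
      * (Algebra.TensorProduct.includeRight : (H ⊗[K] H) →ₐ[K] H ⊗[K] (H ⊗[K] H)) R
/-- A bundled bialgebra over `K`. -/
structure BB (K : Type u) [Field K] : Type (u + 1) where
  T : Type u
  [ring : Ring T]
  [bi : Bialgebra K T]

attribute [instance] BB.ring BB.bi

variable (K H : Type u) [Field K] [Ring H] [HopfAlgebra K H]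

/-- the iterated tensor power `H^{⊗n}` (with a copy of `K` at the left end). -/
noncomputable def TPb : ℕ → BB K
  | 0 => ⟨K⟩
  | n+1 => ⟨(TPb n).T ⊗[K] H⟩

/-- the iterated comultiplication `Δ^{(n)} : H → H^{⊗n}`. -/
noncomputable def Dm : (n : ℕ) → H →ₗ[K] (TPb K H n).T
  | 0 => Coalgebra.counit
  | n+1 => TensorProduct.map (Dm n) LinearMap.id ∘ₗ Coalgebra.comul (R := K)

/-- the inductively defined twisting element `Twiⁿ(R) ∈ H^{⊗n} ⊗ H^{⊗n}`:
`Twi⁰ = 1` and `Twi^{n+1}(R) = Twiⁿ(R)·(Δ^{(n)} ⊗ I ⊗ Δ^{(n)} ⊗ I)(R₂₃)`. -/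
noncomputable def Twi (R : H ⊗[K] H) : (n : ℕ) → (TPb K H n).T ⊗[K] (TPb K H n).T
  | 0 => 1
  | n+1 =>
    (Algebra.TensorProduct.map
      (Algebra.TensorProduct.includeLeft : (TPb K H n).T →ₐ[K] (TPb K H n).T ⊗[K] H)
      (Algebra.TensorProduct.includeLeft : (TPb K H n).T →ₐ[K] (TPb K H n).T ⊗[K] H))
      (Twi R n)
    * (TensorProduct.map (TensorProduct.map (Dm K H n) LinearMap.id)
        (TensorProduct.map (Dm K H n) LinearMap.id))
      (Algebra.TensorProduct.map
        (Algebra.TensorProduct.includeRight : H →ₐ[K] H ⊗[K] H)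
        (Algebra.TensorProduct.includeLeft : H →ₐ[K] H ⊗[K] H) R)

/-- the embedding of `H` into `H^{⊗n}` in the (1-based) `j`-th tensor position. -/
noncomputable def pos : (n : ℕ) → ℕ → (H →ₗ[K] (TPb K H n).T)
  | 0, _ => 0
  | n+1, j =>
    if j = n + 1 then
      (Algebra.TensorProduct.includeRight : H →ₐ[K] (TPb K H n).T ⊗[K] H).toLinearMap
    else
      (Algebra.TensorProduct.includeLeft : (TPb K H n).T →ₐ[K] (TPb K H n).T ⊗[K] H).toLinearMap
        ∘ₗ pos n j

/-- the closed formula `∏_{k=2}^{m} ∏_{l=k-1}^{1} R_{k, m+l}` (outer product in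
increasing `k`, inner product in decreasing `l`), an element of `H^{⊗m} ⊗ H^{⊗m}`,
where `R_{k, m+l}` places the two legs of `R` in tensor positions `k` and `m + l`. -/
noncomputable def closedTwi (R : H ⊗[K] H) (m : ℕ) : (TPb K H m).T ⊗[K] (TPb K H m).T :=
  ((List.range (m - 1)).map (fun k' =>
    (((List.range (k' + 1)).reverse).map (fun l' =>
      TensorProduct.map (pos K H m (k' + 2)) (pos K H m (l' + 1)) R)).prod)).prod

/- ===== auxiliary lemmas ===== -/

section Aux

variable {K H : Type u} [Field K] [Ring H] [HopfAlgebra K H]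

lemma tpMap_tpMap {M N M' N' M'' N'' : Type u}
    [AddCommGroup M] [AddCommGroup N] [AddCommGroup M'] [AddCommGroup N']
    [AddCommGroup M''] [AddCommGroup N'']
    [Module K M] [Module K N] [Module K M'] [Module K N'] [Module K M''] [Module K N'']
    (f₂ : M' →ₗ[K] M'') (g₂ : N' →ₗ[K] N'') (f₁ : M →ₗ[K] M') (g₁ : N →ₗ[K] N')
    (x : M ⊗[K] N) :
    TensorProduct.map f₂ g₂ (TensorProduct.map f₁ g₁ x)
      = TensorProduct.map (f₂ ∘ₗ f₁) (g₂ ∘ₗ g₁) x := by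
  induction x using TensorProduct.induction_on with
  | zero => simp
  | tmul m n => simp
  | add x y hx hy => rw [map_add, map_add, map_add, hx, hy]

lemma algMap_eq {A B C D : Type u} [Ring A] [Ring B] [Ring C] [Ring D]
    [Algebra K A] [Algebra K B] [Algebra K C] [Algebra K D]
    (φ : A →ₐ[K] C) (ψ : B →ₐ[K] D) (x : A ⊗[K] B) :
    Algebra.TensorProduct.map φ ψ x = TensorProduct.map φ.toLinearMap ψ.toLinearMap x := by
  induction x using TensorProduct.induction_on with
  | zero => simp
  | tmul a b => simp
  | add x y hx hy => rw [map_add, map_add, hx, hy]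

end Aux

/-- algebra-hom version of the iterated comultiplication. -/
noncomputable def DmA (K H : Type u) [Field K] [Ring H] [HopfAlgebra K H] :
    (n : ℕ) → H →ₐ[K] (TPb K H n).T
  | 0 => Bialgebra.counitAlgHom K H
  | n+1 => (Algebra.TensorProduct.map (DmA K H n) (AlgHom.id K H)).comp
      (Bialgebra.comulAlgHom K H)

section Aux2

variable {K H : Type u} [Field K] [Ring H] [HopfAlgebra K H]

lemma Dm_eq (n : ℕ) (x : H) : Dm K H n x = DmA K H n x := by
  induction n generalizing x with
  | zero => rfl
  | succ n ih =>
    show TensorProduct.map (Dm K H n) LinearMap.id (Coalgebra.comul x) = _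
    have h1 : ∀ y : H ⊗[K] H,
        TensorProduct.map (Dm K H n) LinearMap.id y
          = Algebra.TensorProduct.map (DmA K H n) (AlgHom.id K H) y := by
      intro y
      rw [algMap_eq, AlgHom.toLinearMap_id,
        show Dm K H n = (DmA K H n).toLinearMap from LinearMap.ext ih]
    rw [h1]
    rfl

lemma Dm_lin (n : ℕ) : Dm K H n = (DmA K H n).toLinearMap :=
  LinearMap.ext (Dm_eq n)

lemma pos_last (n : ℕ) : pos K H (n+1) (n+1)
    = (Algebra.TensorProduct.includeRight : H →ₐ[K] (TPb K H n).T ⊗[K] H).toLinearMap := by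
  rw [pos]; exact if_pos rfl

lemma pos_lt (n j : ℕ) (h : j ≠ n+1) : pos K H (n+1) j
    = (Algebra.TensorProduct.includeLeft :
        (TPb K H n).T →ₐ[K] (TPb K H n).T ⊗[K] H).toLinearMap ∘ₗ pos K H n j := by
  rw [pos]; exact if_neg h

end Aux2

section Aux3

variable {K H : Type u} [Field K] [Ring H] [HopfAlgebra K H]

lemma tpMap_congr₂ {M N P P' : Type u}
    [AddCommGroup M] [AddCommGroup N] [AddCommGroup P] [AddCommGroup P']
    [Module K M] [Module K N] [Module K P] [Module K P']
    {f f' : M →ₗ[K] P} {g g' : N →ₗ[K] P'} (x : M ⊗[K] N)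
    (hf : ∀ a, f a = f' a) (hg : ∀ b, g b = g' b) :
    TensorProduct.map f g x = TensorProduct.map f' g' x := by
  rw [LinearMap.ext hf, LinearMap.ext hg]

end Aux3

/-- the embedding `H ⊗ K → H ⊗ (H ⊗ K)` inserting `1` in the middle slot. -/
noncomputable def chi (K H : Type u) [Field K] [Ring H] [HopfAlgebra K H] :
    (H ⊗[K] K) →ₐ[K] H ⊗[K] (H ⊗[K] K) :=
  Algebra.TensorProduct.map (AlgHom.id K H) (Algebra.ofId K (H ⊗[K] K))

/-- a left inverse for the right factor of `chi`. -/
noncomputable def wmap (K H : Type u) [Field K] [Ring H] [HopfAlgebra K H] :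
    (H ⊗[K] K) →ₗ[K] K :=
  (TensorProduct.lid K K).toLinearMap ∘ₗ
    TensorProduct.map (Coalgebra.counit (R := K) (A := H)) LinearMap.id

section Aux4

variable {K H : Type u} [Field K] [Ring H] [HopfAlgebra K H]

lemma chi_retr :
    (LinearMap.lTensor H (wmap K H)) ∘ₗ (chi K H).toLinearMap
      = (LinearMap.id : (H ⊗[K] K) →ₗ[K] H ⊗[K] K) := by
  apply TensorProduct.ext'
  intro a c
  show (LinearMap.lTensor H (wmap K H)) ((chi K H) (a ⊗ₜ[K] c)) = a ⊗ₜ[K] c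
  rw [show (chi K H) (a ⊗ₜ[K] c)
      = (AlgHom.id K H) a ⊗ₜ[K] (Algebra.ofId K (H ⊗[K] K)) c
      from Algebra.TensorProduct.map_tmul _ _ _ _,
    LinearMap.lTensor_tmul]
  have h1 : (Algebra.ofId K (H ⊗[K] K)) c = c • ((1 : H) ⊗ₜ[K] (1 : K)) := by
    rw [Algebra.ofId_apply, Algebra.algebraMap_eq_smul_one, Algebra.TensorProduct.one_def]
  rw [h1, map_smul]
  have h2 : wmap K H ((1 : H) ⊗ₜ[K] (1 : K)) = 1 := by
    simp [wmap]
  rw [h2]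
  simp

lemma chi_inj {x y : H ⊗[K] K} (h : chi K H x = chi K H y) : x = y := by
  have := congrArg (LinearMap.lTensor H (wmap K H)) h
  have hx := LinearMap.congr_fun (chi_retr (K := K) (H := H)) x
  have hy := LinearMap.congr_fun (chi_retr (K := K) (H := H)) y
  simp only [LinearMap.comp_apply, AlgHom.toLinearMap_apply, LinearMap.id_apply] at hx hy
  rw [hx, hy] at this
  exact this

lemma counit_right (Q : QuasiTriangular K H) :
    TensorProduct.map LinearMap.id (Coalgebra.counit (R := K) (A := H)) Q.R
      = (1 : H ⊗[K] K) := by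
  set u := TensorProduct.map LinearMap.id (Coalgebra.counit (R := K) (A := H)) Q.R with hu
  let Φ : (H ⊗[K] H) →ₐ[K] H ⊗[K] (H ⊗[K] K) :=
    Algebra.TensorProduct.map (AlgHom.id K H)
      (Algebra.TensorProduct.includeLeft : H →ₐ[K] H ⊗[K] K)
  let ψ : (H ⊗[K] (H ⊗[K] H)) →ₐ[K] H ⊗[K] (H ⊗[K] K) :=
    Algebra.TensorProduct.map (AlgHom.id K H)
      (Algebra.TensorProduct.map (AlgHom.id K H) (Bialgebra.counitAlgHom K H))
  have h1 := congrArg ψ Q.hex1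
  have hψL : ψ (LinearMap.lTensor H (Coalgebra.comul (R := K)) Q.R) = Φ Q.R := by
    show ψ (TensorProduct.map LinearMap.id (Coalgebra.comul (R := K)) Q.R) = Φ Q.R
    rw [algMap_eq (x := TensorProduct.map _ _ Q.R), tpMap_tpMap,
      algMap_eq (x := Q.R)]
    refine tpMap_congr₂ Q.R (fun a => by simp) (fun b => ?_)
    show (Algebra.TensorProduct.map (AlgHom.id K H) (Bialgebra.counitAlgHom K H))
        (Coalgebra.comul (R := K) b) = _
    rw [show (Algebra.TensorProduct.map (AlgHom.id K H) (Bialgebra.counitAlgHom K H))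
          (Coalgebra.comul (R := K) b)
        = LinearMap.lTensor H (Coalgebra.counit (R := K) (A := H))
            (Coalgebra.comul (R := K) b) from algMap_eq _ _ _,
      Coalgebra.lTensor_counit_comul]
    rfl
  have hψX : ψ (Algebra.TensorProduct.map (AlgHom.id K H)
      Algebra.TensorProduct.includeRight Q.R) = chi K H u := by
    rw [hu, show chi K H = Algebra.TensorProduct.map (AlgHom.id K H)
        (Algebra.ofId K (H ⊗[K] K)) from rfl,
      algMap_eq (x := Q.R), algMap_eq (x := TensorProduct.map _ _ Q.R), tpMap_tpMap,
      algMap_eq (x := TensorProduct.map _ _ Q.R), tpMap_tpMap]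
    refine tpMap_congr₂ Q.R (fun a => by simp) (fun b => ?_)
    show (Algebra.TensorProduct.map (AlgHom.id K H) (Bialgebra.counitAlgHom K H))
        ((1 : H) ⊗ₜ[K] b) = (Algebra.ofId K (H ⊗[K] K)) (Coalgebra.counit b)
    rw [Algebra.TensorProduct.map_tmul, Algebra.ofId_apply,
      Algebra.algebraMap_eq_smul_one, Algebra.TensorProduct.one_def,
      TensorProduct.smul_tmul', TensorProduct.smul_tmul]
    simp
  have hψY : ψ (Algebra.TensorProduct.map (AlgHom.id K H)
      Algebra.TensorProduct.includeLeft Q.R) = Φ Q.R := by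
    rw [algMap_eq (x := Q.R), algMap_eq (x := TensorProduct.map _ _ Q.R), tpMap_tpMap,
      algMap_eq (x := Q.R)]
    refine tpMap_congr₂ Q.R (fun a => by simp) (fun b => ?_)
    show (Algebra.TensorProduct.map (AlgHom.id K H) (Bialgebra.counitAlgHom K H))
        (b ⊗ₜ[K] (1 : H)) = b ⊗ₜ[K] (1 : K)
    rw [Algebra.TensorProduct.map_tmul]
    simp
  rw [map_mul, hψX, hψY, hψL] at h1
  have h2 : Φ Q.R * Φ Q.Rinv = 1 := by exact (Φ.map_mul _ _).symm.trans (by rw [Q.mul_inv]; exact Φ.map_one)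
  have h3 : chi K H u = 1 := by
    have h4 := congrArg (· * Φ Q.Rinv) h1
    simp only [mul_assoc, h2, mul_one] at h4
    have h6 : chi K H u * Φ Q.R * Φ Q.Rinv = chi K H u :=
      (mul_assoc (chi K H u) (Φ Q.R) (Φ Q.Rinv)).trans
        ((congrArg (chi K H u * ·) h2).trans (mul_one (chi K H u)))
    rw [h6] at h4
    exact h4.symm
  have h5 : chi K H u = chi K H 1 := h3.trans (chi K H).map_one.symm
  exact chi_inj h5

end Aux4



section LemA

variable {K H : Type u} [Field K] [Ring H] [HopfAlgebra K H]

lemma tpMapDm_eq (m : ℕ) (y : H ⊗[K] H) :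
    TensorProduct.map (Dm K H m) LinearMap.id y
      = Algebra.TensorProduct.map (DmA K H m) (AlgHom.id K H) y := by
  rw [algMap_eq, AlgHom.toLinearMap_id, Dm_lin]

lemma lemA (Q : QuasiTriangular K H) : (m : ℕ) →
    TensorProduct.map LinearMap.id (Dm K H m) Q.R
      = (((List.range m).reverse).map
          (fun l' => TensorProduct.map LinearMap.id (pos K H m (l' + 1)) Q.R)).prod
  | 0 => by
    show TensorProduct.map LinearMap.id (Coalgebra.counit (R := K) (A := H)) Q.R = _
    rw [counit_right Q]
    rfl
  | m+1 => by
    have hrev : (List.range (m+1)).reverse = m :: (List.range m).reverse := by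
      rw [List.range_succ, List.reverse_append]; rfl
    rw [hrev, List.map_cons, List.prod_cons]
    let Θ : (H ⊗[K] (H ⊗[K] H)) →ₐ[K] H ⊗[K] ((TPb K H m).T ⊗[K] H) :=
      Algebra.TensorProduct.map (AlgHom.id K H)
        (Algebra.TensorProduct.map (DmA K H m) (AlgHom.id K H))
    let Ω' : (H ⊗[K] (TPb K H m).T) →ₐ[K] H ⊗[K] ((TPb K H m).T ⊗[K] H) :=
      Algebra.TensorProduct.map (AlgHom.id K H)
        (Algebra.TensorProduct.includeLeft :
          (TPb K H m).T →ₐ[K] (TPb K H m).T ⊗[K] H)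
    have hL : TensorProduct.map LinearMap.id (Dm K H (m+1)) Q.R
        = Θ (LinearMap.lTensor H (Coalgebra.comul (R := K)) Q.R) := by
      show TensorProduct.map LinearMap.id
          (TensorProduct.map (Dm K H m) LinearMap.id ∘ₗ Coalgebra.comul (R := K)) Q.R
        = Θ (TensorProduct.map LinearMap.id (Coalgebra.comul (R := K)) Q.R)
      rw [algMap_eq (x := TensorProduct.map _ _ Q.R), tpMap_tpMap]
      refine tpMap_congr₂ Q.R (fun a => by simp) (fun b => ?_)
      simp only [LinearMap.comp_apply, AlgHom.toLinearMap_apply]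
      exact tpMapDm_eq m _
    have hX : Θ (Algebra.TensorProduct.map (AlgHom.id K H)
        Algebra.TensorProduct.includeRight Q.R)
      = TensorProduct.map LinearMap.id (pos K H (m+1) (m+1)) Q.R := by
      rw [algMap_eq (x := Q.R), algMap_eq (x := TensorProduct.map _ _ Q.R), tpMap_tpMap]
      refine tpMap_congr₂ Q.R (fun a => by simp) (fun b => ?_)
      simp only [LinearMap.comp_apply, AlgHom.toLinearMap_apply]
      rw [pos_last]
      show (Algebra.TensorProduct.map (DmA K H m) (AlgHom.id K H)) ((1 : H) ⊗ₜ[K] b)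
        = (1 : (TPb K H m).T) ⊗ₜ[K] b
      rw [Algebra.TensorProduct.map_tmul, map_one]
      rfl
    have hY : Θ (Algebra.TensorProduct.map (AlgHom.id K H)
        Algebra.TensorProduct.includeLeft Q.R)
      = Ω' (TensorProduct.map LinearMap.id (Dm K H m) Q.R) := by
      rw [algMap_eq (x := Q.R), algMap_eq (x := TensorProduct.map _ _ Q.R), tpMap_tpMap,
        algMap_eq (x := TensorProduct.map _ _ Q.R), tpMap_tpMap]
      refine tpMap_congr₂ Q.R (fun a => by simp) (fun b => ?_)
      simp only [LinearMap.comp_apply, AlgHom.toLinearMap_apply]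
      show (Algebra.TensorProduct.map (DmA K H m) (AlgHom.id K H)) (b ⊗ₜ[K] (1 : H))
        = Algebra.TensorProduct.includeLeft (Dm K H m b)
      rw [Algebra.TensorProduct.map_tmul, Dm_eq]
      rfl
    rw [hL, Q.hex1, map_mul, hX, hY, lemA Q m, map_list_prod, List.map_map]
    congr 1
    congr 1
    apply List.map_congr_left
    intro l' hl'
    have hlt : l' < m := List.mem_range.mp (List.mem_reverse.mp hl')
    show Ω' (TensorProduct.map LinearMap.id (pos K H m (l' + 1)) Q.R) = _
    rw [algMap_eq (x := TensorProduct.map _ _ Q.R), tpMap_tpMap,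
      pos_lt m (l' + 1) (by omega)]
    refine tpMap_congr₂ Q.R (fun a => by simp) (fun b => rfl)

end LemA

section Final

variable {K H : Type u} [Field K] [Ring H] [HopfAlgebra K H]

lemma newFactor (Q : QuasiTriangular K H) (m : ℕ) :
    (TensorProduct.map (TensorProduct.map (Dm K H m) LinearMap.id)
        (TensorProduct.map (Dm K H m) LinearMap.id))
      (Algebra.TensorProduct.map
        (Algebra.TensorProduct.includeRight : H →ₐ[K] H ⊗[K] H)
        (Algebra.TensorProduct.includeLeft : H →ₐ[K] H ⊗[K] H) Q.R)
      = (((List.range m).reverse).map (fun l' =>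
          TensorProduct.map (pos K H (m+1) (m+1)) (pos K H (m+1) (l'+1)) Q.R)).prod := by
  let Ω : (H ⊗[K] (TPb K H m).T) →ₐ[K]
      ((TPb K H m).T ⊗[K] H) ⊗[K] ((TPb K H m).T ⊗[K] H) :=
    Algebra.TensorProduct.map
      (Algebra.TensorProduct.includeRight : H →ₐ[K] (TPb K H m).T ⊗[K] H)
      (Algebra.TensorProduct.includeLeft : (TPb K H m).T →ₐ[K] (TPb K H m).T ⊗[K] H)
  have h1 : (TensorProduct.map (TensorProduct.map (Dm K H m) LinearMap.id)
        (TensorProduct.map (Dm K H m) LinearMap.id))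
      (Algebra.TensorProduct.map
        (Algebra.TensorProduct.includeRight : H →ₐ[K] H ⊗[K] H)
        (Algebra.TensorProduct.includeLeft : H →ₐ[K] H ⊗[K] H) Q.R)
      = Ω (TensorProduct.map LinearMap.id (Dm K H m) Q.R) := by
    rw [algMap_eq (x := Q.R), tpMap_tpMap,
      algMap_eq (x := TensorProduct.map _ _ Q.R), tpMap_tpMap]
    refine tpMap_congr₂ Q.R (fun a => ?_) (fun b => ?_)
    · simp only [LinearMap.comp_apply, AlgHom.toLinearMap_apply, LinearMap.id_apply]
      show TensorProduct.map (Dm K H m) LinearMap.id ((1 : H) ⊗ₜ[K] a) = _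
      rw [TensorProduct.map_tmul,
        show Dm K H m 1 = 1 by rw [Dm_eq]; exact map_one _]
      rfl
    · simp only [LinearMap.comp_apply, AlgHom.toLinearMap_apply]
      show TensorProduct.map (Dm K H m) LinearMap.id (b ⊗ₜ[K] (1 : H)) = _
      rw [TensorProduct.map_tmul]
      rfl
  rw [h1, lemA Q m, map_list_prod, List.map_map]
  congr 1
  apply List.map_congr_left
  intro l' hl'
  have hlt : l' < m := List.mem_range.mp (List.mem_reverse.mp hl')
  show Ω (TensorProduct.map LinearMap.id (pos K H m (l' + 1)) Q.R) = _
  rw [algMap_eq (x := TensorProduct.map _ _ Q.R), tpMap_tpMap,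
    pos_lt m (l' + 1) (by omega), pos_last]
  refine tpMap_congr₂ Q.R (fun a => rfl) (fun b => rfl)

lemma closed_succ (R : H ⊗[K] H) (n : ℕ) :
    closedTwi K H R (n+1)
      = (Algebra.TensorProduct.map
          (Algebra.TensorProduct.includeLeft :
            (TPb K H n).T →ₐ[K] (TPb K H n).T ⊗[K] H)
          (Algebra.TensorProduct.includeLeft :
            (TPb K H n).T →ₐ[K] (TPb K H n).T ⊗[K] H) :
          ((TPb K H n).T ⊗[K] (TPb K H n).T) →ₐ[K]
            (TPb K H (n+1)).T ⊗[K] (TPb K H (n+1)).T)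
          (closedTwi K H R n)
        * (((List.range n).reverse).map (fun l' =>
            TensorProduct.map (pos K H (n+1) (n+1)) (pos K H (n+1) (l'+1)) R)).prod := by
  cases n with
  | zero =>
    show (1 : (TPb K H 1).T ⊗[K] (TPb K H 1).T) = _
    rw [show closedTwi K H R 0 = 1 from rfl, map_one]
    simp
  | succ p =>
    let ι : ((TPb K H (p+1)).T ⊗[K] (TPb K H (p+1)).T) →ₐ[K]
        (TPb K H (p+2)).T ⊗[K] (TPb K H (p+2)).T :=
      Algebra.TensorProduct.map
        (Algebra.TensorProduct.includeLeft :
          (TPb K H (p+1)).T →ₐ[K] (TPb K H (p+1)).T ⊗[K] H)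
        (Algebra.TensorProduct.includeLeft :
          (TPb K H (p+1)).T →ₐ[K] (TPb K H (p+1)).T ⊗[K] H)
    show ((List.range (p+1)).map (fun k' =>
        (((List.range (k' + 1)).reverse).map (fun l' =>
          TensorProduct.map (pos K H (p+2) (k' + 2)) (pos K H (p+2) (l' + 1)) R)).prod)).prod
      = ι (((List.range p).map (fun k' =>
          (((List.range (k' + 1)).reverse).map (fun l' =>
            TensorProduct.map (pos K H (p+1) (k' + 2)) (pos K H (p+1) (l' + 1)) R)).prod)).prod)
        * (((List.range (p+1)).reverse).map (fun l' =>
            TensorProduct.map (pos K H (p+2) (p+2)) (pos K H (p+2) (l'+1)) R)).prod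
    rw [List.range_succ, List.map_append, List.prod_append, List.map_singleton,
      List.prod_singleton, map_list_prod, List.map_map]
    congr 1
    symm
    congr 1
    apply List.map_congr_left
    intro k' hk'
    have hkp : k' < p := List.mem_range.mp hk'
    show ι ((((List.range (k' + 1)).reverse).map (fun l' =>
        TensorProduct.map (pos K H (p+1) (k' + 2)) (pos K H (p+1) (l' + 1)) R)).prod)
      = (((List.range (k' + 1)).reverse).map (fun l' =>
          TensorProduct.map (pos K H (p+2) (k' + 2)) (pos K H (p+2) (l' + 1)) R)).prod
    rw [map_list_prod, List.map_map]
    congr 1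
    apply List.map_congr_left
    intro l' hl'
    have hlk : l' < k' + 1 := List.mem_range.mp (List.mem_reverse.mp hl')
    show ι (TensorProduct.map (pos K H (p+1) (k' + 2)) (pos K H (p+1) (l' + 1)) R)
      = TensorProduct.map (pos K H (p+2) (k' + 2)) (pos K H (p+2) (l' + 1)) R
    refine (algMap_eq _ _ _).trans ?_
    rw [tpMap_tpMap,
      pos_lt (p+1) (k' + 2) (by omega), pos_lt (p+1) (l' + 1) (by omega)]
    rfl
    rw [List.range_succ]

end Final

/- STATEMENT 19: for a quasitriangular Hopf algebra (H, R), the inductively defined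
twists satisfy the closed formula Twiᵐ(R) = ∏_{k=2}^{m} ∏_{l=k-1}^{1} R_{k, m+l}. -/

theorem stmt19 {K H : Type u} [Field K] [Ring H] [HopfAlgebra K H]
    (Q : QuasiTriangular K H) (m : ℕ) :
    Twi K H Q.R m = closedTwi K H Q.R m := by
  induction m with
  | zero => rfl
  | succ n ih =>
    show (Algebra.TensorProduct.map
        (Algebra.TensorProduct.includeLeft :
          (TPb K H n).T →ₐ[K] (TPb K H n).T ⊗[K] H)
        (Algebra.TensorProduct.includeLeft :
          (TPb K H n).T →ₐ[K] (TPb K H n).T ⊗[K] H))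
        (Twi K H Q.R n)
      * (TensorProduct.map (TensorProduct.map (Dm K H n) LinearMap.id)
          (TensorProduct.map (Dm K H n) LinearMap.id))
        (Algebra.TensorProduct.map
          (Algebra.TensorProduct.includeRight : H →ₐ[K] H ⊗[K] H)
          (Algebra.TensorProduct.includeLeft : H →ₐ[K] H ⊗[K] H) Q.R)
      = closedTwi K H Q.R (n+1)
    rw [ih, newFactor Q n]
    exact (closed_succ Q.R n).symm
end
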